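/- arXiv:1708.09365 — 3 statements merged into one kernel-verified Lean document; each statement's English description precedes it below -/
import Mathlib

section
/- The formal power series $\mathcal{J}(x) = \sum_{d=0}^{\infty} x^d \frac{\prod_{a=1}^{n}\prod_{m=1}^{l_a d}(l_a w_0 - \lambda_a + m\hbar)}{d!\hbar^d \prod_{i=1}^{N-1}\prod_{m=1}^{d}(w_0 - w_i + m\hbar)}$ satisfies $\prod_{i=0}^{N-1}(\hbar x \frac{d}{dx} + w_0 - w_i)\, \mathcal{J}(x) = x \prod_{a=1}^{n}\prod_{m=1}^{l_a}(l_a \hbar x \frac{d}{dx} + l_a w_0 - \lambda_a + m\hbar)\, \mathcal{J}(x)$. -/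
/-- The Euler-type operator `ℏ x d/dx` acting termwise on formal power series. -/
noncomputable def eulerOp2 (ℏ : ℂ) : PowerSeries ℂ → PowerSeries ℂ :=
  fun f => PowerSeries.mk fun d => (d : ℂ) * ℏ * PowerSeries.coeff (R := ℂ) d f

/-- The on-shell equivariant `J`-function (vortex partition function) of the Fano complete
intersection `X_{l;w,λ} ⊂ ℂP^{N-1}`. -/
noncomputable def jCompInt (N n : ℕ) (l : ℕ → ℕ) (ℏ : ℂ) (w lam : ℕ → ℂ) : PowerSeries ℂ :=
  PowerSeries.mk fun d =>
    (∏ a ∈ Finset.Icc 1 n, ∏ m ∈ Finset.Icc 1 (l a * d),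
        ((l a : ℂ) * w 0 - lam a + (m : ℂ) * ℏ)) /
      ((d.factorial : ℂ) * ℏ ^ d *
        ∏ i ∈ Finset.Icc 1 (N - 1), ∏ m ∈ Finset.Icc 1 d, (w 0 - w i + (m : ℂ) * ℏ))

def IsDiag (G : PowerSeries ℂ → PowerSeries ℂ) (q : ℕ → ℂ) : Prop :=
  ∀ f d, PowerSeries.coeff (R := ℂ) d (G f) = q d * PowerSeries.coeff (R := ℂ) d f

lemma isDiag_foldr {α : Type} (F : α → PowerSeries ℂ → PowerSeries ℂ) (q : α → ℕ → ℂ)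
    (L : List α) (h : ∀ i ∈ L, IsDiag (F i) (q i)) :
    IsDiag (L.foldr (fun i g => F i ∘ g) id) (fun d => (L.map (fun i => q i d)).prod) := by
  induction L with
  | nil => intro f d; simp
  | cons a t ih =>
    intro f d
    simp only [List.foldr_cons, Function.comp_apply, List.map_cons, List.prod_cons]
    rw [h a (by simp), ih (fun i hi => h i (by simp [hi])) f d]
    ring

lemma isDiag_atomic (ℏ α β : ℂ) :
    IsDiag (fun f => PowerSeries.C (R := ℂ) α * eulerOp2 ℏ f + PowerSeries.C (R := ℂ) β * f)
      (fun d => α * ((d : ℂ) * ℏ) + β) := by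
  intro f d
  simp [eulerOp2, PowerSeries.coeff_C_mul]
  ring

lemma isDiag_atomic' (ℏ β : ℂ) :
    IsDiag (fun f => eulerOp2 ℏ f + PowerSeries.C (R := ℂ) β * f)
      (fun d => (d : ℂ) * ℏ + β) := by
  intro f d
  simp [eulerOp2, PowerSeries.coeff_C_mul]
  ring

/-- the GKZ equation for the Fano complete intersection:
`∏_{i=0}^{N-1}(ℏ x d/dx + w₀ - wᵢ) 𝒥 = x ∏_{a=1}^{n} ∏_{m=1}^{l_a} (l_a ℏ x d/dx + l_a w₀ - λ_a + mℏ) 𝒥`. -/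
theorem gkz_equation_complete_intersection (N n : ℕ) (hN : 1 ≤ N) (l : ℕ → ℕ)
    (hl : ∀ a ∈ Finset.Icc 1 n, 1 ≤ l a) (hsum : ∑ a ∈ Finset.Icc 1 n, l a < N)
    (ℏ : ℂ) (hℏ : ℏ ≠ 0) (w lam : ℕ → ℂ)
    (hw : ∀ i ∈ Finset.Icc 1 (N - 1), ∀ m : ℕ, 1 ≤ m → w 0 - w i + (m : ℂ) * ℏ ≠ 0) :
    ((List.range N).foldr
        (fun i g => (fun f => eulerOp2 ℏ f + PowerSeries.C (R := ℂ) (w 0 - w i) * f) ∘ g) id)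
      (jCompInt N n l ℏ w lam) =
    PowerSeries.X *
      (((List.range n).foldr
        (fun a g =>
          ((List.range (l (a + 1))).foldr
            (fun m h =>
              (fun f => PowerSeries.C (R := ℂ) ((l (a + 1) : ℕ) : ℂ) * eulerOp2 ℏ f +
                PowerSeries.C (R := ℂ) (((l (a + 1) : ℕ) : ℂ) * w 0 - lam (a + 1) +
                  (((m + 1 : ℕ)) : ℂ) * ℏ) * f) ∘ h)
            id) ∘ g) id)
        (jCompInt N n l ℏ w lam)) := by
  obtain ⟨K, rfl⟩ : ∃ K, N = K + 1 := ⟨N - 1, (Nat.succ_pred_eq_of_pos hN).symm⟩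
  have hK : K + 1 - 1 = K := rfl
  rw [hK] at hw
  set J := jCompInt (K + 1) n l ℏ w lam with hJ
  have hL : IsDiag ((List.range (K + 1)).foldr
        (fun i g => (fun f => eulerOp2 ℏ f + PowerSeries.C (R := ℂ) (w 0 - w i) * f) ∘ g) id)
      (fun d => ∏ i ∈ Finset.range (K + 1), ((d : ℂ) * ℏ + (w 0 - w i))) :=
    isDiag_foldr _ (fun i d => (d : ℂ) * ℏ + (w 0 - w i)) _
      (fun i _ => isDiag_atomic' ℏ (w 0 - w i))
  have hR : IsDiag ((List.range n).foldr
        (fun a g =>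
          ((List.range (l (a + 1))).foldr
            (fun m h =>
              (fun f => PowerSeries.C (R := ℂ) ((l (a + 1) : ℕ) : ℂ) * eulerOp2 ℏ f +
                PowerSeries.C (R := ℂ) (((l (a + 1) : ℕ) : ℂ) * w 0 - lam (a + 1) +
                  (((m + 1 : ℕ)) : ℂ) * ℏ) * f) ∘ h)
            id) ∘ g) id)
      (fun d => ∏ a ∈ Finset.range n, ∏ m ∈ Finset.range (l (a + 1)),
        (((l (a + 1) : ℕ) : ℂ) * ((d : ℂ) * ℏ) +
          (((l (a + 1) : ℕ) : ℂ) * w 0 - lam (a + 1) + (((m + 1 : ℕ)) : ℂ) * ℏ))) :=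
    isDiag_foldr _
      (fun a d => ∏ m ∈ Finset.range (l (a + 1)),
        (((l (a + 1) : ℕ) : ℂ) * ((d : ℂ) * ℏ) +
          (((l (a + 1) : ℕ) : ℂ) * w 0 - lam (a + 1) + (((m + 1 : ℕ)) : ℂ) * ℏ))) _
      (fun a _ => isDiag_foldr _
        (fun m d => ((l (a + 1) : ℕ) : ℂ) * ((d : ℂ) * ℏ) +
          (((l (a + 1) : ℕ) : ℂ) * w 0 - lam (a + 1) + (((m + 1 : ℕ)) : ℂ) * ℏ)) _
        (fun m _ => isDiag_atomic ℏ _ _))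
  have prod_Ioc_shift : ∀ (c e : ℕ) (f : ℕ → ℂ),
      ∏ i ∈ Finset.Ioc c (c + e), f i = ∏ k ∈ Finset.Ioc 0 e, f (c + k) := by
    intro c e f
    have h := Finset.prod_map (Finset.Ioc 0 e) (addLeftEmbedding c) f
    rw [Finset.map_add_left_Ioc] at h
    simpa [addLeftEmbedding_apply] using h
  have prod_Icc_range : ∀ (K : ℕ) (f : ℕ → ℂ),
      ∏ i ∈ Finset.Icc 1 K, f i = ∏ i ∈ Finset.range K, f (1 + i) := by
    intro K f
    rw [← Finset.Ico_add_one_right_eq_Icc, Finset.prod_Ico_eq_prod_range]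
    simp
  ext d
  rcases d with _ | d
  · rw [hL J 0]
    beta_reduce
    have h0 : (∏ i ∈ Finset.range (K + 1), (((0 : ℕ) : ℂ) * ℏ + (w 0 - w i))) = 0 :=
      Finset.prod_eq_zero (Finset.mem_range.mpr (Nat.succ_pos K)) (by simp)
    rw [h0, zero_mul]
    simp
  · rw [hL J (d + 1), PowerSeries.coeff_succ_X_mul, hR J d]
    -- abbreviations
    set Ad := fun e : ℕ => ∏ a ∈ Finset.Icc 1 n, ∏ m ∈ Finset.Icc 1 (l a * e),
        ((l a : ℂ) * w 0 - lam a + (m : ℂ) * ℏ) with hAd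
    set Bd := fun e : ℕ => ∏ i ∈ Finset.Icc 1 K, ∏ m ∈ Finset.Icc 1 e,
        (w 0 - w i + (m : ℂ) * ℏ) with hBd
    have hJcoeff : ∀ e, PowerSeries.coeff (R := ℂ) e J =
        Ad e / ((e.factorial : ℂ) * ℏ ^ e * Bd e) := by
      intro e; rw [hJ]; simp [jCompInt, hK, Ad, Bd]
    set P := ∏ i ∈ Finset.Icc 1 K, (w 0 - w i + ((d + 1 : ℕ) : ℂ) * ℏ) with hP
    set Q := ∏ a ∈ Finset.Icc 1 n, ∏ k ∈ Finset.Icc 1 (l a),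
        ((l a : ℂ) * w 0 - lam a + ((l a * d + k : ℕ) : ℂ) * ℏ) with hQ
    -- LHS product = (d+1)ℏ * P
    have hLP : (∏ i ∈ Finset.range (K + 1), (((d + 1 : ℕ) : ℂ) * ℏ + (w 0 - w i)))
        = ((d + 1 : ℕ) : ℂ) * ℏ * P := by
      rw [Finset.prod_range_succ']
      have : (∏ i ∈ Finset.range K, (((d + 1 : ℕ) : ℂ) * ℏ + (w 0 - w (i + 1)))) = P := by
        rw [hP, prod_Icc_range]
        exact Finset.prod_congr rfl (fun i _ => by rw [add_comm 1 i]; ring)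
      rw [this]; ring
    -- RHS product = Q
    have hRQ : (∏ a ∈ Finset.range n, ∏ m ∈ Finset.range (l (a + 1)),
        (((l (a + 1) : ℕ) : ℂ) * ((d : ℂ) * ℏ) +
          (((l (a + 1) : ℕ) : ℂ) * w 0 - lam (a + 1) + (((m + 1 : ℕ)) : ℂ) * ℏ))) = Q := by
      rw [hQ, prod_Icc_range]
      refine (Finset.prod_congr rfl (fun a _ => ?_)).symm
      rw [prod_Icc_range, add_comm 1 a]
      refine Finset.prod_congr rfl (fun m _ => ?_)
      rw [add_comm 1 m]; push_cast; ring
    -- B recursion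
    have hB : Bd (d + 1) = Bd d * P := by
      rw [hBd, hP, ← Finset.prod_mul_distrib]
      exact Finset.prod_congr rfl (fun i _ => by
        rw [Finset.prod_Icc_succ_top (Nat.le_add_left 1 d)])
    -- A recursion
    have hA : Ad (d + 1) = Ad d * Q := by
      rw [hAd, hQ, ← Finset.prod_mul_distrib]
      refine Finset.prod_congr rfl (fun a _ => ?_)
      have h1 : ∀ x : ℕ, Finset.Icc 1 x = Finset.Ioc 0 x := fun x => rfl
      have h2 : l a * (d + 1) = l a * d + l a := by ring
      rw [h2, h1, h1, h1, ← Finset.prod_Ioc_consecutive _ (Nat.zero_le (l a * d))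
        (Nat.le_add_right (l a * d) (l a))]
      congr 1
      rw [prod_Ioc_shift (l a * d) (l a)]
    have hne1 : ((d + 1).factorial : ℂ) ≠ 0 := Nat.cast_ne_zero.mpr (Nat.factorial_ne_zero _)
    have hne2 : (d.factorial : ℂ) ≠ 0 := Nat.cast_ne_zero.mpr (Nat.factorial_ne_zero _)
    have hne3 : ℏ ^ (d + 1) ≠ 0 := pow_ne_zero _ hℏ
    have hne4 : ℏ ^ d ≠ 0 := pow_ne_zero _ hℏ
    have hneB : Bd d ≠ 0 := by
      rw [hBd]
      refine Finset.prod_ne_zero_iff.mpr (fun i hi => Finset.prod_ne_zero_iff.mpr (fun m hm => ?_))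
      exact hw i hi m (Finset.mem_Icc.mp hm).1
    have hneP : P ≠ 0 := by
      rw [hP]
      exact Finset.prod_ne_zero_iff.mpr (fun i hi => hw i hi (d + 1) (Nat.le_add_left 1 d))
    beta_reduce
    rw [hJcoeff, hJcoeff, hLP, hRQ, hA, hB, Nat.factorial_succ]
    push_cast
    have hd1 : ((d : ℂ) + 1) ≠ 0 := by
      have := Nat.cast_add_one_ne_zero (R := ℂ) d
      exact_mod_cast this
    field_simp
    ring
end

section
/- Let $W(u_1,\dots,u_{N-1},v_1,\dots,v_n;x) = \sum_{i=1}^{N-1}(u_i + w_i \log u_i) - \sum_{a=1}^{n}(v_a + \lambda_a \log v_a) + \frac{v_1^{l_1}\cdots v_n^{l_n}}{u_1\cdots u_{N-1}} x + w_0 \log(\frac{v_1^{l_1}\cdots v_n^{l_n}}{u_1\cdots u_{N-1}} x)$. If $(\bm{u},\bm{v})$ is a critical point of $W(\cdot;x)$ and $y = x \frac{\partial W}{\partial x} = \frac{v_1^{l_1}\cdots v_n^{l_n}}{u_1\cdots u_{N-1}} x + w_0$, then $\prod_{i=0}^{N-1}(y - w_i) = x \prod_{a=1}^{n}(l_a y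 - \lambda_a)^{l_a}$. -/
/-- critical points of the mirror Landau–Ginzburg potential of the complete
intersection `X_{l;w,λ}` lie on the GKZ curve
`∏_{i=0}^{N-1}(y - wᵢ) = x ∏_{a=1}^{n}(l_a y - λ_a)^{l_a}`,
where `y = (v₁^{l₁}⋯v_n^{l_n}/(u₁⋯u_{N-1})) x + w₀`. -/
theorem gkz_curve_from_critical_points_complete_intersection
    (N n : ℕ) (hN : 2 ≤ N) (l : ℕ → ℕ) (hl : ∀ a ∈ Finset.Icc 1 n, 1 ≤ l a)
    (w lam : ℕ → ℂ) (x : ℂ) (hx : x ≠ 0)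
    (u v : ℕ → ℂ) (hu : ∀ i ∈ Finset.Icc 1 (N - 1), u i ≠ 0)
    (hv : ∀ a ∈ Finset.Icc 1 n, v a ≠ 0)
    (hcritu : ∀ i ∈ Finset.Icc 1 (N - 1),
      1 + w i / u i -
        (1 / u i) * ((∏ a ∈ Finset.Icc 1 n, v a ^ l a) /
          (∏ j ∈ Finset.Icc 1 (N - 1), u j) * x) - w 0 / u i = 0)
    (hcritv : ∀ a ∈ Finset.Icc 1 n,
      -1 - lam a / v a +
        ((l a : ℂ) / v a) * ((∏ b ∈ Finset.Icc 1 n, v b ^ l b) /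
          (∏ j ∈ Finset.Icc 1 (N - 1), u j) * x) + (l a : ℂ) * w 0 / v a = 0) :
    ∏ i ∈ Finset.range N,
        (((∏ a ∈ Finset.Icc 1 n, v a ^ l a) / (∏ j ∈ Finset.Icc 1 (N - 1), u j) * x + w 0)
          - w i) =
      x * ∏ a ∈ Finset.Icc 1 n,
        ((l a : ℂ) *
            ((∏ b ∈ Finset.Icc 1 n, v b ^ l b) / (∏ j ∈ Finset.Icc 1 (N - 1), u j) * x + w 0)
          - lam a) ^ l a := by
  set P := ∏ a ∈ Finset.Icc 1 n, v a ^ l a with hP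
  set Q := ∏ j ∈ Finset.Icc 1 (N - 1), u j with hQdef
  have hQ0 : Q ≠ 0 := Finset.prod_ne_zero_iff.mpr hu
  set y := P / Q * x + w 0 with hy
  have key_u : ∀ i ∈ Finset.Icc 1 (N - 1), y - w i = u i := by
    intro i hi
    have h := hcritu i hi
    have hui := hu i hi
    have h2 : u i ^ 2 * ((u i + w i) * Q - P * x - Q * w 0) = 0 := by
      field_simp at h
      linear_combination (u i ^ 2) * h
    have h3 := (mul_eq_zero.mp h2).resolve_left (pow_ne_zero 2 hui)
    show P / Q * x + w 0 - w i = u i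
    field_simp
    linear_combination -h3
  have key_v : ∀ a ∈ Finset.Icc 1 n, (l a : ℂ) * y - lam a = v a := by
    intro a ha
    have h := hcritv a ha
    have hva := hv a ha
    have h2 : v a ^ 2 * ((l a : ℂ) * (P * x) + (l a : ℂ) * w 0 * Q - (v a + lam a) * Q) = 0 := by
      field_simp at h
      linear_combination (v a ^ 2) * h
    have h3 := (mul_eq_zero.mp h2).resolve_left (pow_ne_zero 2 hva)
    show (l a : ℂ) * (P / Q * x + w 0) - lam a = v a
    field_simp
    linear_combination h3
  have hrange : Finset.range N = insert 0 (Finset.Icc 1 (N - 1)) := by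
    ext i; simp [Finset.mem_range, Finset.mem_insert, Finset.mem_Icc]; omega
  rw [hrange, Finset.prod_insert (by simp)]
  rw [Finset.prod_congr rfl key_u]
  have hPv : ∏ a ∈ Finset.Icc 1 n, ((l a : ℂ) * y - lam a) ^ l a = P :=
    Finset.prod_congr rfl fun a ha => by rw [key_v a ha]
  rw [hPv]
  show (P / Q * x + w 0 - w 0) * Q = x * P
  field_simp
  ring
end

section
/- For the equivariant $\mathbb{C}\mathbf{P}^1$ Schrödinger equation $\hbar^2(P^2 + P') = Q_0(x) - \frac{\hbar^2}{4x^2}$ with $Q_0(x) = \frac{4x+(w_0-w_1)^2}{4x^2}$, the Riccati recursion $P_0^{(\pm)} = \pm\sqrt{Q_0}$, $P_{n+1}^{(\pm)} = \frac{1}{2P_0^{(\pm)}}(\delta_{n,1}\cdot(-\frac{1}{4x^2}) - \sum_{n_1+n_2=n+1, n_i \ge 1} P_{n_1}^{(\pm)} P_{n_2}^{(\pm)} - \frac{dP_n^{(\pm)}}{dx})$ yields: $P_0^{(\pm)}(x) = \pm\frac{w_0-w_1}{2x}(1 + O(x))$ and $P_1^{(\pm)}(x) = \frac{1}{2x}(1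 + O(x))$ as $x \to 0$, while $P_n^{(\pm)}(x)$ is holomorphic at $x = 0$ for every $n \ge 2$. -/
open scoped Topology
open Asymptotics

private lemma analyticAt_deriv' {g : ℂ → ℂ} {x : ℂ} (h : AnalyticAt ℂ g x) :
    AnalyticAt ℂ (deriv g) x := by
  have hs : AnalyticOnNhd ℂ g {y | AnalyticAt ℂ g y} := fun y hy => hy
  exact hs.deriv x h

private lemma eventually_deriv_eq {f g : ℂ → ℂ}
    (h : ∀ᶠ x in 𝓝[≠] (0:ℂ), f x = g x) :
    ∀ᶠ x in 𝓝[≠] (0:ℂ), deriv f x = deriv g x := by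
  obtain ⟨U, hUo, hU0, hUs⟩ := mem_nhdsWithin.mp h
  have hmem : U ∩ {(0:ℂ)}ᶜ ∈ 𝓝[≠] (0:ℂ) :=
    Filter.inter_mem (mem_nhdsWithin_of_mem_nhds (hUo.mem_nhds hU0)) self_mem_nhdsWithin
  filter_upwards [hmem] with x hx
  have hopen : IsOpen (U ∩ {(0:ℂ)}ᶜ) := hUo.inter isOpen_compl_singleton
  have : f =ᶠ[𝓝 x] g := by
    filter_upwards [hopen.mem_nhds hx] with y hy using hUs hy
  exact this.deriv_eq

private lemma antidiag_filter (m : ℕ) :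
    (Finset.HasAntidiagonal.antidiagonal m).filter (fun p => 1 ≤ p.1 ∧ 1 ≤ p.2)
      = (Finset.Icc 1 (m-1)).image (fun i => (i, m - i)) := by
  ext ⟨a, b⟩
  simp only [Finset.mem_filter, Finset.HasAntidiagonal.mem_antidiagonal, Finset.mem_image, Finset.mem_Icc,
    Prod.mk.injEq]
  constructor
  · rintro ⟨hab, h1, h2⟩
    exact ⟨a, ⟨h1, by omega⟩, rfl, by omega⟩
  · rintro ⟨i, ⟨h1, h2⟩, rfl, rfl⟩
    refine ⟨by omega, h1, by omega⟩

private lemma sum_ad (P : ℕ → ℂ → ℂ) (x : ℂ) (m : ℕ) :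
    (∑ p ∈ (Finset.HasAntidiagonal.antidiagonal m).filter (fun p => 1 ≤ p.1 ∧ 1 ≤ p.2), P p.1 x * P p.2 x)
      = ∑ i ∈ Finset.Icc 1 (m-1), P i x * P (m - i) x := by
  rw [antidiag_filter, Finset.sum_image]
  intro i _ j _ hij
  exact (Prod.mk.injEq .. ▸ hij).1

set_option maxHeartbeats 2000000 in
/-- for the Riccati recursion of the equivariant `ℂP¹` Schrödinger equation,
`P₀(x) = (w₀-w₁)/(2x)(1+O(x))` (branch fixing, assumed), `P₁(x) = 1/(2x)(1+O(x))`, and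
`Pₙ` is holomorphic at `x = 0` for every `n ≥ 2`. -/
theorem riccati_coefficients_near_zero (w0 w1 : ℂ) (hw : w0 ≠ w1) (P : ℕ → ℂ → ℂ)
    (hP0an : ∀ᶠ x in 𝓝[≠] (0 : ℂ), AnalyticAt ℂ (P 0) x)
    (hP0sq : ∀ x : ℂ, x ≠ 0 → (P 0 x) ^ 2 = (4 * x + (w0 - w1) ^ 2) / (4 * x ^ 2))
    (hbranch : (fun x : ℂ => P 0 x - (w0 - w1) / (2 * x)) =O[𝓝[≠] (0 : ℂ)]
        (fun _ => (1 : ℂ)))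
    (hrec : ∀ n : ℕ, ∀ x : ℂ, x ≠ 0 →
      P (n + 1) x = 1 / (2 * P 0 x) *
        ((if n = 1 then -(1 / (4 * x ^ 2)) else 0) -
          (∑ p ∈ (Finset.HasAntidiagonal.antidiagonal (n + 1)).filter (fun p => 1 ≤ p.1 ∧ 1 ≤ p.2),
            P p.1 x * P p.2 x) - deriv (P n) x)) :
    ((fun x : ℂ => P 1 x - 1 / (2 * x)) =O[𝓝[≠] (0 : ℂ)] (fun _ => (1 : ℂ))) ∧
    (∀ n : ℕ, 2 ≤ n → ∃ g : ℂ → ℂ, AnalyticAt ℂ g 0 ∧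
      ∀ᶠ x in 𝓝[≠] (0 : ℂ), P n x = g x) := by
  have hc : w0 - w1 ≠ 0 := sub_ne_zero.mpr hw
  set c : ℂ := w0 - w1 with hcdef
  have hc2 : (c:ℂ)^2 ≠ 0 := pow_ne_zero _ hc
  -- an analytic square root F with F^2 = c^2/4 + x near 0, F 0 = c/2
  obtain ⟨F, hFan, hF0, hFsq⟩ : ∃ F : ℂ → ℂ, AnalyticAt ℂ F 0 ∧ F 0 = c/2 ∧
      ∀ᶠ x in 𝓝 (0:ℂ), F x ^ 2 = c^2/4 + x := by
    refine ⟨fun x => c/2 * Complex.exp (Complex.log (1 + 4*x/c^2) / 2), ?_, ?_, ?_⟩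
    · apply analyticAt_const.mul
      apply AnalyticAt.cexp
      apply AnalyticAt.div _ analyticAt_const two_ne_zero
      have hwan : AnalyticAt ℂ (fun x : ℂ => 1 + 4*x/c^2) 0 := by
        apply analyticAt_const.add
        exact (analyticAt_const.mul analyticAt_id).div analyticAt_const hc2
      have hlog : AnalyticAt ℂ Complex.log ((fun x : ℂ => 1 + 4*x/c^2) 0) := by
        apply analyticAt_clog
        simp [Complex.mem_slitPlane_iff]
      have : AnalyticAt ℂ (Complex.log ∘ (fun x : ℂ => 1 + 4*x/c^2)) 0 :=
        AnalyticAt.comp (g := Complex.log) (f := fun x : ℂ => 1 + 4*x/c^2) hlog hwan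
      exact this
    · simp [Complex.log_one]
    · have hcont : ContinuousAt (fun x : ℂ => 1 + 4*x/c^2) 0 := by
        fun_prop
      have hne : ∀ᶠ x in 𝓝 (0:ℂ), 1 + 4*x/c^2 ≠ 0 :=
        hcont.tendsto.eventually_ne (by simp)
      filter_upwards [hne] with x hx
      have hexp : Complex.exp (Complex.log (1 + 4*x/c^2) / 2) ^ 2 = 1 + 4*x/c^2 := by
        rw [← Complex.exp_nat_mul]
        rw [show (2:ℕ) * (Complex.log (1 + 4*x/c^2) / 2) = Complex.log (1 + 4*x/c^2) by
          push_cast; ring]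
        exact Complex.exp_log hx
      rw [mul_pow, hexp]
      field_simp
      ring
  have hF0ne : F 0 ≠ 0 := by rw [hF0]; exact div_ne_zero hc two_ne_zero
  -- eventual facts about F near 0
  have hFevan : ∀ᶠ x in 𝓝 (0:ℂ), AnalyticAt ℂ F x := hFan.eventually_analyticAt
  have hFne : ∀ᶠ x in 𝓝 (0:ℂ), F x ≠ 0 := hFan.continuousAt.tendsto.eventually_ne hF0ne
  have hcpos : (0:ℝ) < ‖c‖ := norm_pos_iff.mpr hc
  have hFclose : ∀ᶠ x in 𝓝 (0:ℂ), ‖F x - c/2‖ < ‖c‖/4 := by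
    have h1 : Filter.Tendsto F (𝓝 0) (𝓝 (c/2)) := hF0 ▸ hFan.continuousAt.tendsto
    have h2 := Metric.tendsto_nhds.mp h1 (‖c‖/4) (by positivity)
    filter_upwards [h2] with x hx
    rwa [dist_eq_norm] at hx
  obtain ⟨C, hC⟩ := Asymptotics.isBigO_iff.mp hbranch
  have hsmall : ∀ᶠ x in 𝓝 (0:ℂ), |C| * ‖x‖ < ‖c‖/4 := by
    have hball : Metric.ball (0:ℂ) ((‖c‖/4)/(|C|+1)) ∈ 𝓝 (0:ℂ) :=
      Metric.ball_mem_nhds _ (by positivity)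
    filter_upwards [hball] with x hx
    rw [Metric.mem_ball, dist_zero_right] at hx
    have h1 : (|C|+1) * ‖x‖ < (|C|+1) * ((‖c‖/4)/(|C|+1)) :=
      mul_lt_mul_of_pos_left hx (by positivity)
    have h2 : (|C|+1) * ((‖c‖/4)/(|C|+1)) = ‖c‖/4 := by
      field_simp
    have h3 : |C| * ‖x‖ ≤ (|C|+1) * ‖x‖ :=
      mul_le_mul_of_nonneg_right (by linarith) (norm_nonneg x)
    linarith
  have hP0F : ∀ᶠ x in 𝓝[≠] (0:ℂ), P 0 x = F x / x := by
    filter_upwards [hC, hsmall.filter_mono nhdsWithin_le_nhds,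
      hFsq.filter_mono nhdsWithin_le_nhds, hFclose.filter_mono nhdsWithin_le_nhds,
      self_mem_nhdsWithin] with x hCx hsx hFsqx hFcx hx
    have hx0 : x ≠ 0 := hx
    have hsq : (x * P 0 x)^2 = F x ^ 2 := by
      rw [mul_pow, hP0sq x hx0, hFsqx]
      field_simp
      ring
    have hfac : (x * P 0 x - F x) * (x * P 0 x + F x) = 0 := by linear_combination hsq
    have hclose : ‖x * P 0 x - c/2‖ < ‖c‖/4 := by
      have he : x * P 0 x - c/2 = x * (P 0 x - c/(2*x)) := by
        field_simp
      rw [he, norm_mul]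
      have h1 : ‖P 0 x - c/(2*x)‖ ≤ C := by simpa using hCx
      have h2 : ‖x‖ * ‖P 0 x - c/(2*x)‖ ≤ ‖x‖ * |C| :=
        mul_le_mul_of_nonneg_left (h1.trans (le_abs_self C)) (norm_nonneg x)
      calc ‖x‖ * ‖P 0 x - c/(2*x)‖ ≤ |C| * ‖x‖ := by linarith [h2]
        _ < ‖c‖/4 := hsx
    rcases mul_eq_zero.mp hfac with h | h
    · have hxP : x * P 0 x = F x := sub_eq_zero.mp h
      rw [eq_div_iff hx0]
      linear_combination hxP
    · exfalso
      have h1 : x * P 0 x = -F x := eq_neg_of_add_eq_zero_left h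
      have h2 : ‖x * P 0 x - c/2‖ = ‖F x + c/2‖ := by
        rw [h1, ← norm_neg]
        congr 1
        ring
      have ht : ‖c‖ ≤ ‖(F x - c/2) + c‖ + ‖F x - c/2‖ := by
        have he : c = ((F x - c/2) + c) - (F x - c/2) := by ring
        calc ‖c‖ = ‖((F x - c/2) + c) - (F x - c/2)‖ := by rw [← he]
          _ ≤ ‖(F x - c/2) + c‖ + ‖F x - c/2‖ := norm_sub_le _ _
      have h3 : ‖F x + c/2‖ ≥ ‖c‖ - ‖F x - c/2‖ := by
        have he : F x + c/2 = (F x - c/2) + c := by ring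
        rw [he]
        linarith
      rw [h2] at hclose
      linarith
  -- main induction
  have hmain : ∀ n : ℕ, 1 ≤ n → ∃ g : ℂ → ℂ, AnalyticAt ℂ g 0 ∧
      ∀ᶠ x in 𝓝[≠] (0:ℂ), P n x = (if n = 1 then 1/(2*x) else 0) + g x := by
    intro n
    induction n using Nat.strong_induction_on with
    | _ n IH =>
    intro hn
    rcases n with _ | _ | _ | m
    · omega
    · -- n = 1
      refine ⟨fun x => -(deriv F x) / (2 * F x), ?_, ?_⟩
      · exact ((analyticAt_deriv' hFan).neg).div (analyticAt_const.mul hFan)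
          (by simpa using hF0ne)
      · have hder : ∀ᶠ x in 𝓝[≠] (0:ℂ), deriv (P 0) x = deriv (fun y => F y / y) x :=
          eventually_deriv_eq hP0F
        filter_upwards [hP0F, hder, hFne.filter_mono nhdsWithin_le_nhds,
          hFevan.filter_mono nhdsWithin_le_nhds, self_mem_nhdsWithin]
          with x hPF hdx hFx hFa hx
        have hx0 : x ≠ 0 := hx
        have hdFx : HasDerivAt (fun y => F y / y) ((deriv F x * x - F x * 1)/x^2) x :=
          (hFa.differentiableAt.hasDerivAt).div (hasDerivAt_id x) hx0
        have hsum : (∑ p ∈ (Finset.HasAntidiagonal.antidiagonal (0+1)).filter (fun p => 1 ≤ p.1 ∧ 1 ≤ p.2),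
            P p.1 x * P p.2 x) = 0 := by
          rw [sum_ad P x]
          simp
        rw [hrec 0 x hx0, hPF, hdx, hdFx.deriv, hsum,
          if_neg (show ¬((0:ℕ) = 1) by omega), if_pos (show 0+1 = 1 from rfl)]
        field_simp [hx0, hFx]
        ring
    · -- n = 2
      obtain ⟨g1, hg1an, hg1ev⟩ := IH 1 (by omega) (by omega)
      simp only [reduceIte] at hg1ev
      refine ⟨fun x => (-(g1 x) - x * (g1 x)^2 - x * deriv g1 x) / (2 * F x), ?_, ?_⟩
      · exact ((hg1an.neg.sub (analyticAt_id.mul (hg1an.pow 2))).sub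
          (analyticAt_id.mul (analyticAt_deriv' hg1an))).div
          (analyticAt_const.mul hFan) (by simpa using hF0ne)
      · have hφ : ∀ᶠ x in 𝓝[≠] (0:ℂ), P 1 x = (fun y => 2⁻¹ * y⁻¹ + g1 y) x := by
          filter_upwards [hg1ev] with x hx
          rw [hx]
          ring
        have hder := eventually_deriv_eq hφ
        filter_upwards [hP0F, hg1ev, hder, hFne.filter_mono nhdsWithin_le_nhds,
          ((hg1an.eventually_analyticAt).filter_mono nhdsWithin_le_nhds),
          self_mem_nhdsWithin] with x hPF hg1x hdx hFx hg1a hx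
        have hx0 : x ≠ 0 := hx
        have hdφ : HasDerivAt (fun y : ℂ => 2⁻¹ * y⁻¹ + g1 y)
            (2⁻¹ * -(x^2)⁻¹ + deriv g1 x) x :=
          ((hasDerivAt_inv hx0).const_mul 2⁻¹).add hg1a.differentiableAt.hasDerivAt
        have hsum : (∑ p ∈ (Finset.HasAntidiagonal.antidiagonal (1+1)).filter (fun p => 1 ≤ p.1 ∧ 1 ≤ p.2),
            P p.1 x * P p.2 x) = P 1 x * P 1 x := by
          rw [sum_ad P x]
          norm_num
        rw [hrec 1 x hx0, hPF, hdx, hdφ.deriv, hsum, hg1x,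
          if_pos (show (1:ℕ) = 1 from rfl), if_neg (show ¬(0+1+1 = 1) by omega)]
        field_simp
        ring
    · -- n = m + 3
      have hex : ∀ k : ℕ, ∃ g : ℂ → ℂ, AnalyticAt ℂ g 0 ∧
          ((1 ≤ k ∧ k < m + 3) → ∀ᶠ x in 𝓝[≠] (0:ℂ),
            P k x = (if k = 1 then 1/(2*x) else 0) + g x) := by
        intro k
        by_cases hk : 1 ≤ k ∧ k < m + 3
        · obtain ⟨g, hgan, hgev⟩ := IH k hk.2 hk.1
          exact ⟨g, hgan, fun _ => hgev⟩
        · exact ⟨fun _ => 0, analyticAt_const, fun h => absurd h hk⟩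
      choose G hGan hGev using hex
      refine ⟨fun x => (-(G (m+2) x) - 2*x*(G 1 x)*(G (m+2) x)
          - x*(∑ i ∈ Finset.Icc 2 (m+1), G i x * G (m+3-i) x)
          - x * deriv (G (m+2)) x) / (2 * F x), ?_, ?_⟩
      · exact ((((hGan (m+2)).neg.sub
          (((analyticAt_const.mul analyticAt_id).mul (hGan 1)).mul (hGan (m+2)))).sub
          (analyticAt_id.mul (Finset.analyticAt_fun_sum _
            (fun i _ => (hGan i).mul (hGan (m+3-i)))))).sub
          (analyticAt_id.mul (analyticAt_deriv' (hGan (m+2))))).div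
          (analyticAt_const.mul hFan) (by simpa using hF0ne)
      · have hall : ∀ᶠ x in 𝓝[≠] (0:ℂ), ∀ i ∈ Finset.Icc 1 (m+2),
            P i x = (if i = 1 then 1/(2*x) else 0) + G i x := by
          rw [Filter.eventually_all_finset]
          intro i hi
          rw [Finset.mem_Icc] at hi
          exact hGev i ⟨hi.1, by omega⟩
        have hPm2 : ∀ᶠ x in 𝓝[≠] (0:ℂ), P (m+2) x = G (m+2) x := by
          filter_upwards [hGev (m+2) ⟨by omega, by omega⟩] with x hx
          rw [hx, if_neg (show ¬(m+2 = 1) by omega), zero_add]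
        have hder := eventually_deriv_eq hPm2
        filter_upwards [hP0F, hall, hder, hFne.filter_mono nhdsWithin_le_nhds,
          self_mem_nhdsWithin] with x hPF hax hdx hFx hx
        have hx0 : x ≠ 0 := hx
        have hsum : (∑ p ∈ (Finset.HasAntidiagonal.antidiagonal (m+2+1)).filter (fun p => 1 ≤ p.1 ∧ 1 ≤ p.2),
            P p.1 x * P p.2 x)
            = P 1 x * P (m+2) x + P (m+2) x * P 1 x
              + ∑ i ∈ Finset.Icc 2 (m+1), P i x * P (m+3-i) x := by
          rw [sum_ad P x]
          have hsplit : Finset.Icc 1 (m+3-1) = insert 1 (insert (m+2) (Finset.Icc 2 (m+1))) := by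
            ext i
            simp only [Finset.mem_Icc, Finset.mem_insert]
            omega
          rw [hsplit, Finset.sum_insert (by simp only [Finset.mem_insert, Finset.mem_Icc]; omega),
            Finset.sum_insert (by simp only [Finset.mem_Icc]; omega)]
          have h1 : m + 3 - 1 = m + 2 := by omega
          have h2 : m + 3 - (m + 2) = 1 := by omega
          rw [h1, h2]
          ring
        have hSG : (∑ i ∈ Finset.Icc 2 (m+1), P i x * P (m+3-i) x)
            = ∑ i ∈ Finset.Icc 2 (m+1), G i x * G (m+3-i) x := by
          apply Finset.sum_congr rfl
          intro i hi
          rw [Finset.mem_Icc] at hi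
          rw [hax i (by rw [Finset.mem_Icc]; omega), hax (m+3-i) (by rw [Finset.mem_Icc]; omega),
            if_neg (show ¬(i = 1) by omega), if_neg (show ¬(m+3-i = 1) by omega),
            zero_add, zero_add]
        have hP1 : P 1 x = 1/(2*x) + G 1 x := by
          have := hax 1 (by rw [Finset.mem_Icc]; omega)
          rwa [if_pos (show (1:ℕ) = 1 from rfl)] at this
        have hPm2x : P (m+2) x = G (m+2) x := by
          have := hax (m+2) (by rw [Finset.mem_Icc]; omega)
          rwa [if_neg (show ¬(m+2 = 1) by omega), zero_add] at this
        rw [hrec (m+2) x hx0, hPF, hdx, hsum, hSG, hP1, hPm2x,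
          if_neg (show ¬(m+2 = 1) by omega)]
        rw [if_neg (show ¬(m+1+1+1 = 1) by omega)]
        field_simp [hx0, hFx]
        ring
  constructor
  · obtain ⟨g, hg, hev⟩ := hmain 1 le_rfl
    simp only [reduceIte] at hev
    have hev' : (fun x => P 1 x - 1/(2*x)) =ᶠ[𝓝[≠] (0:ℂ)] g := by
      filter_upwards [hev] with x hx
      rw [hx]
      ring
    have htg : Filter.Tendsto g (𝓝[≠] (0:ℂ)) (𝓝 (g 0)) :=
      hg.continuousAt.tendsto.mono_left nhdsWithin_le_nhds
    exact hev'.trans_isBigO (htg.isBigO_one ℂ)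
  · intro n hn
    obtain ⟨g, hg, hev⟩ := hmain n (by omega)
    refine ⟨g, hg, ?_⟩
    filter_upwards [hev] with x hx
    rw [hx, if_neg (show ¬(n = 1) by omega), zero_add]
end
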